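/- For every integer ℓ ≥ 1 and every integer m ≥ 1, the 2-partitioning function of the class of decision stumps on ℝ^ℓ satisfies π²(m) ≤ (1/2)·Σ_{k=1}^{m−1} min{2ℓ, C(m,k)}, where C(m,k) is the binomial coefficient. -/

import Mathlib

/-- A `c`-partition of a finite set `S`: a set of `c` pairwise disjoint nonempty
subsets (parts) whose union is `S`. -/
def IsPartition {α : Type*} (S : Finset α) (c : ℕ) (P : Finset (Finset α)) : Prop :=
  P.card = c ∧ (∀ p ∈ P, p.Nonempty) ∧
    (∀ p ∈ P, ∀ q ∈ P, p ≠ q → Disjoint p q) ∧ (∀ x, x ∈ S ↔ ∃ p ∈ P, x ∈ p)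

/-- A 2-partition `P = {A, S \ A}` of a sample `S ⊆ ℝ^ℓ` is realizable by a decision
stump if there are a feature `i` and threshold `θ` such that one of the two parts is
`{x ∈ S | x^i > θ}`. -/
def StumpRealizable (ℓ : ℕ) (S : Finset (Fin ℓ → ℝ))
    (P : Finset (Finset (Fin ℓ → ℝ))) : Prop :=
  IsPartition S 2 P ∧ ∃ (i : Fin ℓ) (θ : ℝ), S.filter (fun x => θ < x i) ∈ P

/-- The 2-partitioning function of the class of decision stumps on `ℝ^ℓ`:
the largest number of distinct 2-partitions realizable by a stump on a sample
of `m` points. -/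
noncomputable def stumpPi (ℓ m : ℕ) : ℕ :=
  sSup {n : ℕ | ∃ S : Finset (Fin ℓ → ℝ), S.card = m ∧
    n = {P | StumpRealizable ℓ S P}.ncard}

private lemma pair_sdiff {α : Type*} [DecidableEq α] {S A B : Finset α}
    (hU : ∀ x, x ∈ S ↔ x ∈ A ∨ x ∈ B) (hd : Disjoint A B) :
    S \ A = B := by
  ext x
  simp only [Finset.mem_sdiff, hU]
  constructor
  · rintro ⟨hx | hx, hna⟩
    · exact absurd hx hna
    · exact hx
  · intro hx
    exact ⟨Or.inr hx, fun hxa => (Finset.disjoint_left.mp hd hxa) hx⟩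

private lemma isPartition_struct {α : Type*} [DecidableEq α] {S : Finset α}
    {P : Finset (Finset α)} (h : IsPartition S 2 P) {A : Finset α} (hA : A ∈ P) :
    A.Nonempty ∧ A ⊆ S ∧ (S \ A).Nonempty ∧ P = {A, S \ A} := by
  obtain ⟨hcard, hne, hdisj, hmem⟩ := h
  obtain ⟨a, b, hab, rfl⟩ := Finset.card_eq_two.mp hcard
  have ha : a ∈ ({a, b} : Finset (Finset α)) := by simp
  have hb : b ∈ ({a, b} : Finset (Finset α)) := by simp
  have hU : ∀ x, x ∈ S ↔ x ∈ a ∨ x ∈ b := by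
    intro x; rw [hmem x]; simp
  have hA' : A = a ∨ A = b := by simpa using hA
  rcases hA' with rfl | rfl
  · have hsd : S \ A = b := pair_sdiff hU (hdisj _ ha _ hb hab)
    refine ⟨hne _ hA, fun x hx => (hU x).mpr (Or.inl hx), hsd ▸ hne _ hb, by rw [hsd]⟩
  · have hsd : S \ A = a := by
      apply pair_sdiff _ (hdisj _ hb _ ha (Ne.symm hab))
      intro x; rw [hU x]; tauto
    refine ⟨hne _ hA, fun x hx => (hU x).mpr (Or.inr hx), hsd ▸ hne _ ha, ?_⟩
    rw [hsd, Finset.pair_comm]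

private lemma filter_chain_eq {ℓ : ℕ} (S : Finset (Fin ℓ → ℝ)) (i : Fin ℓ) (θ θ' : ℝ)
    (h : (S.filter (fun x => θ < x i)).card = (S.filter (fun x => θ' < x i)).card) :
    S.filter (fun x => θ < x i) = S.filter (fun x => θ' < x i) := by
  rcases le_total θ θ' with h' | h'
  · exact (Finset.eq_of_subset_of_card_le
      (Finset.monotone_filter_right S (fun x _ hx => lt_of_le_of_lt h' hx)) h.le).symm
  · exact Finset.eq_of_subset_of_card_le
      (Finset.monotone_filter_right S (fun x _ hx => lt_of_le_of_lt h' hx)) h.ge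

private lemma main_bound (ℓ m : ℕ) (hℓ : 1 ≤ ℓ) (S : Finset (Fin ℓ → ℝ)) (hS : S.card = m) :
    2 * {P | StumpRealizable ℓ S P}.ncard ≤
      ∑ k ∈ Finset.Icc 1 (m - 1), min (2 * ℓ) (m.choose k) := by
  classical
  set Pset : Finset (Finset (Finset (Fin ℓ → ℝ))) :=
    S.powerset.powerset.filter (fun P => StumpRealizable ℓ S P) with hPset
  have hmemPset : ∀ P, P ∈ Pset ↔ StumpRealizable ℓ S P := by
    intro P
    simp only [hPset, Finset.mem_filter, Finset.mem_powerset, and_iff_right_iff_imp]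
    intro hr p hp
    exact Finset.mem_powerset.mpr ((isPartition_struct hr.1 hp).2.1)
  have hsetP : {P | StumpRealizable ℓ S P} = ↑Pset := by
    ext P; simp [hmemPset]
  rw [hsetP, Set.ncard_coe_finset]
  set Rset : Finset (Finset (Fin ℓ → ℝ)) :=
    S.powerset.filter (fun A => ∃ P ∈ Pset, A ∈ P) with hRset
  have hRfact : ∀ A ∈ Rset, A.Nonempty ∧ A ⊆ S ∧ (S \ A).Nonempty ∧
      ({A, S \ A} : Finset (Finset (Fin ℓ → ℝ))) ∈ Pset ∧
      (∃ (i : Fin ℓ) (θ : ℝ), S.filter (fun x => θ < x i) = A ∨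
        S.filter (fun x => θ < x i) = S \ A) := by
    intro A hA
    obtain ⟨-, P, hP, hAP⟩ := by simpa [hRset] using hA
    have hreal := (hmemPset P).mp hP
    obtain ⟨h1, h2, h3, h4⟩ := isPartition_struct hreal.1 hAP
    refine ⟨h1, h2, h3, h4 ▸ hP, ?_⟩
    obtain ⟨i, θ, hf⟩ := hreal.2
    rw [h4] at hf
    exact ⟨i, θ, by simpa using hf⟩
  -- Claim A : Rset.card = 2 * Pset.card
  have claimA : Rset.card = 2 * Pset.card := by
    rw [Finset.card_eq_sum_card_fiberwise
      (f := fun A => ({A, S \ A} : Finset (Finset (Fin ℓ → ℝ)))) (t := Pset)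
      (fun A hA => (hRfact A hA).2.2.2.1)]
    rw [Finset.sum_congr rfl (g := fun _ => 2), Finset.sum_const, smul_eq_mul, mul_comm]
    intro P hP
    have hreal := (hmemPset P).mp hP
    have : Rset.filter (fun A => ({A, S \ A} : Finset (Finset (Fin ℓ → ℝ))) = P) = P := by
      ext A
      simp only [Finset.mem_filter]
      constructor
      · rintro ⟨hA, rfl⟩
        exact Finset.mem_insert_self _ _
      · intro hAP
        obtain ⟨h1, h2, h3, h4⟩ := isPartition_struct hreal.1 hAP
        refine ⟨?_, h4.symm⟩
        simp only [hRset, Finset.mem_filter, Finset.mem_powerset]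
        exact ⟨h2, P, hP, hAP⟩
    rw [this, hreal.1.1]
  -- Claim B : split Rset by cardinality
  have claimB : Rset.card =
      ∑ k ∈ Finset.Icc 1 (m - 1), (Rset.filter (fun A => A.card = k)).card := by
    apply Finset.card_eq_sum_card_fiberwise
    intro A hA
    obtain ⟨h1, h2, h3, -, -⟩ := hRfact A hA
    rw [Finset.mem_coe, Finset.mem_Icc]
    have hlt : A.card < S.card := Finset.card_lt_card
      (Finset.ssubset_iff_of_subset h2 |>.mpr (by
        obtain ⟨x, hx⟩ := h3
        exact ⟨x, (Finset.mem_sdiff.mp hx).1, (Finset.mem_sdiff.mp hx).2⟩))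
    have hpos : 1 ≤ A.card := Finset.card_pos.mpr h1
    omega
  rw [← claimA, claimB]
  apply Finset.sum_le_sum
  intro k hk
  rw [le_min_iff]
  constructor
  · -- at most 2ℓ parts of size k
    set f : Finset (Fin ℓ → ℝ) → Fin ℓ × Bool := fun A =>
      if h : ∃ (i : Fin ℓ) (θ : ℝ), S.filter (fun x => θ < x i) = A then
        (h.choose, true)
      else if h' : ∃ (i : Fin ℓ) (θ : ℝ), S.filter (fun x => θ < x i) = S \ A then
        (h'.choose, false)
      else (⟨0, hℓ⟩, false) with hf
    have key : ∀ A ∈ Rset.filter (fun A => A.card = k),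
        (f A).2 = true → ∃ θ, S.filter (fun x => θ < x (f A).1) = A := by
      intro A hA hb
      by_cases h : ∃ (i : Fin ℓ) (θ : ℝ), S.filter (fun x => θ < x i) = A
      · refine ⟨h.choose_spec.choose, ?_⟩
        have := h.choose_spec.choose_spec
        simp only [hf, dif_pos h]
        exact this
      · exfalso
        simp only [hf, dif_neg h] at hb
        split_ifs at hb <;> simp at hb
    have key2 : ∀ A ∈ Rset.filter (fun A => A.card = k),
        (f A).2 = false → ∃ θ, S.filter (fun x => θ < x (f A).1) = S \ A := by
      intro A hA hb
      by_cases h : ∃ (i : Fin ℓ) (θ : ℝ), S.filter (fun x => θ < x i) = A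
      · simp [hf, dif_pos h] at hb
      · obtain ⟨hA', hcard⟩ := Finset.mem_filter.mp hA
        obtain ⟨-, -, -, -, i, θ, hor⟩ := hRfact A hA'
        have h' : ∃ (i : Fin ℓ) (θ : ℝ), S.filter (fun x => θ < x i) = S \ A := by
          rcases hor with hcase | hcase
          · exact absurd ⟨i, θ, hcase⟩ h
          · exact ⟨i, θ, hcase⟩
        refine ⟨h'.choose_spec.choose, ?_⟩
        have := h'.choose_spec.choose_spec
        simp only [hf, dif_neg h, dif_pos h']
        exact this
    calc (Rset.filter (fun A => A.card = k)).card
        ≤ (Finset.univ : Finset (Fin ℓ × Bool)).card := by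
          apply Finset.card_le_card_of_injOn f (fun _ _ => Finset.mem_univ _)
          intro A hA A' hA' hfe
          have hcA : A.card = k := (Finset.mem_filter.mp hA).2
          have hcA' : A'.card = k := (Finset.mem_filter.mp hA').2
          have hsA : A ⊆ S := (hRfact A (Finset.mem_filter.mp hA).1).2.1
          have hsA' : A' ⊆ S := (hRfact A' (Finset.mem_filter.mp hA').1).2.1
          rcases hb : (f A).2 with hb2 | hb2
          · -- false case: complements realized
            obtain ⟨θ, hθ⟩ := key2 A hA hb
            obtain ⟨θ', hθ'⟩ := key2 A' hA' (by rw [← hfe]; exact hb)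
            rw [hfe] at hθ
            have hcards : (S \ A).card = (S \ A').card := by
              rw [Finset.card_sdiff_of_subset hsA, Finset.card_sdiff_of_subset hsA', hcA, hcA']
            have := filter_chain_eq S (f A').1 θ θ' (by rw [hθ, hθ', hcards])
            have hsd : S \ A = S \ A' := hθ.symm.trans (this.trans hθ')
            have : S \ (S \ A) = S \ (S \ A') := by rw [hsd]
            rwa [Finset.sdiff_sdiff_eq_self hsA, Finset.sdiff_sdiff_eq_self hsA'] at this
          · obtain ⟨θ, hθ⟩ := key A hA hb
            obtain ⟨θ', hθ'⟩ := key A' hA' (by rw [← hfe]; exact hb)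
            rw [hfe] at hθ
            have := filter_chain_eq S (f A').1 θ θ' (by rw [hθ, hθ', hcA, hcA'])
            exact hθ.symm.trans (this.trans hθ')
      _ = 2 * ℓ := by simp [mul_comm]
  · -- at most choose m k subsets of size k
    calc (Rset.filter (fun A => A.card = k)).card
        ≤ (S.powersetCard k).card := by
          apply Finset.card_le_card
          intro A hA
          obtain ⟨hA', hcard⟩ := Finset.mem_filter.mp hA
          exact Finset.mem_powersetCard.mpr ⟨(hRfact A hA').2.1, hcard⟩
      _ = m.choose k := by rw [Finset.card_powersetCard, hS]

theorem stump_two_partitioning_upper_bound (ℓ m : ℕ) (hℓ : 1 ≤ ℓ) (hm : 1 ≤ m) :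
    (stumpPi ℓ m : ℝ) ≤
      (1 / 2) * ∑ k ∈ Finset.Icc 1 (m - 1), (min (2 * ℓ) (m.choose k) : ℝ) := by
  set T : ℕ := ∑ k ∈ Finset.Icc 1 (m - 1), min (2 * ℓ) (m.choose k) with hT
  have hRHS : (1 / 2 : ℝ) * ∑ k ∈ Finset.Icc 1 (m - 1), (min (2 * ℓ) (m.choose k) : ℝ)
      = (T : ℝ) / 2 := by
    rw [hT]
    push_cast
    ring
  rw [hRHS]
  have h1 : stumpPi ℓ m ≤ T / 2 := by
    apply csSup_le'
    rintro n ⟨S, hScard, rfl⟩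
    have := main_bound ℓ m hℓ S hScard
    omega
  calc (stumpPi ℓ m : ℝ) ≤ ((T / 2 : ℕ) : ℝ) := by exact_mod_cast h1
    _ ≤ (T : ℝ) / 2 := Nat.cast_div_le
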